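/- Let k be a real number and x₀ > exp(−k). If x : [0,∞) → ℝ is differentiable, satisfies x(t) > 0 for all t ≥ 0, x(0) = x₀, and x'(t) = x(t)·log x(t) + k·x(t) for all t ≥ 0, then x(t) → +∞ as t → ∞. In particular, for every choice of gain k ∈ ℝ, the equilibrium 0 of the deterministic system dx/dt = x·log|x| + kx is not globally attracting: there exist initial conditions whose solutions diverge to infinity. -/

import Mathlib

/-- The deterministic system `x' = x log x + k x` cannot be globally stabilized by
any linear controller `u(x) = kx`: any positive solution starting at `x₀ > exp (−k)`
diverges to `+∞`. -/
theorem stmt_1 (k x₀ : ℝ) (hx₀ : Real.exp (-k) < x₀) (x : ℝ → ℝ)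
    (hpos : ∀ t ∈ Set.Ici (0 : ℝ), 0 < x t)
    (hderiv : ∀ t ∈ Set.Ici (0 : ℝ),
      HasDerivWithinAt x (x t * Real.log (x t) + k * x t) (Set.Ici (0 : ℝ)) t)
    (hinit : x 0 = x₀) :
    Filter.Tendsto x Filter.atTop Filter.atTop := by
  set z : ℝ → ℝ := fun t => (Real.log (x t) + k) * Real.exp (-t) with hz_def
  -- derivative of y = log x + k is y itself on Ici 0
  have hy : ∀ t ∈ Set.Ici (0 : ℝ),
      HasDerivWithinAt (fun s => Real.log (x s) + k)
        (Real.log (x t) + k) (Set.Ici (0 : ℝ)) t := by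
    intro t ht
    have hx := hpos t ht
    have h1 : HasDerivWithinAt (fun s => Real.log (x s))
        ((x t)⁻¹ * (x t * Real.log (x t) + k * x t)) (Set.Ici (0 : ℝ)) t :=
      (Real.hasDerivAt_log hx.ne').comp_hasDerivWithinAt t (hderiv t ht)
    have h2 : (x t)⁻¹ * (x t * Real.log (x t) + k * x t) = Real.log (x t) + k := by
      field_simp
    rw [h2] at h1
    simpa using h1.add_const k
  -- derivative of z is 0 on Ici 0
  have hz : ∀ t ∈ Set.Ici (0 : ℝ),
      HasDerivWithinAt z 0 (Set.Ici (0 : ℝ)) t := by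
    intro t ht
    have he : HasDerivWithinAt (fun s : ℝ => Real.exp (-s))
        (-Real.exp (-t)) (Set.Ici (0 : ℝ)) t := by
      have := ((Real.hasDerivAt_exp (-t)).comp t ((hasDerivAt_id t).neg)).hasDerivWithinAt
        (s := Set.Ici (0 : ℝ))
      simpa [Function.comp_def] using this
    have := (hy t ht).mul he
    simpa [hz_def, Pi.mul_def] using this.congr_deriv (by ring)
  -- z is constant on Ici 0
  have hconst : ∀ t ∈ Set.Ici (0 : ℝ), z t = z 0 := by
    intro t ht
    have hcont : ContinuousOn z (Set.Icc 0 t) := fun s hs =>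
      ((hz s (Set.Icc_subset_Ici_self hs)).continuousWithinAt).mono
        (Set.Icc_subset_Ici_self)
    have := constant_of_has_deriv_right_zero hcont (fun s hs =>
      (hz s hs.1).mono
        (Set.Ici_subset_Ici.mpr hs.1)) t (Set.right_mem_Icc.mpr ht)
    exact this
  -- hence log (x t) = c * exp t - k with c > 0
  have hc : 0 < Real.log x₀ + k := by
    have := Real.log_lt_log (Real.exp_pos _) hx₀
    rw [Real.log_exp] at this
    linarith
  have hlog : ∀ t ∈ Set.Ici (0 : ℝ),
      Real.log (x t) = (Real.log x₀ + k) * Real.exp t - k := by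
    intro t ht
    have h := hconst t ht
    have he : Real.exp (-t) ≠ 0 := (Real.exp_pos _).ne'
    simp only [hz_def, hinit, neg_zero, Real.exp_zero, mul_one] at h
    rw [Real.exp_neg] at h
    field_simp at h
    linarith
  -- log (x t) → ∞
  have hlogtop : Filter.Tendsto (fun t => Real.log (x t)) Filter.atTop Filter.atTop := by
    have h1 : Filter.Tendsto (fun t : ℝ => (Real.log x₀ + k) * Real.exp t - k)
        Filter.atTop Filter.atTop :=
      (Real.tendsto_exp_atTop.const_mul_atTop hc).atTop_add tendsto_const_nhds
    refine h1.congr' ?_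
    filter_upwards [Filter.eventually_ge_atTop (0 : ℝ)] with t ht
    exact (hlog t ht).symm
  -- conclude x t = exp (log (x t)) → ∞
  have : Filter.Tendsto (fun t => Real.exp (Real.log (x t))) Filter.atTop Filter.atTop :=
    Real.tendsto_exp_atTop.comp hlogtop
  refine this.congr' ?_
  filter_upwards [Filter.eventually_ge_atTop (0 : ℝ)] with t ht
  exact Real.exp_log (hpos t ht)
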